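/- Let A be a Φ-local Φ-ring. Then A is integrally closed in its closure A^◁ = S⁻¹A, where S is the set of elements of A generating an admissible ideal. -/

import Mathlib

/-- A ring with constructible supports (a `Φ`-ring): a commutative ring together with a
family of finitely generated ideals (the *admissible* ideals) containing the unit ideal,
stable under products, and such that any finitely generated ideal containing an admissible
ideal is admissible. -/
structure PhiRing (A : Type*) [CommRing A] where
  adm : Set (Ideal A)
  fg_of_mem : ∀ I ∈ adm, I.FG
  top_mem : ⊤ ∈ adm
  mul_mem : ∀ I ∈ adm, ∀ J ∈ adm, I * J ∈ adm
  enlarge_mem : ∀ I ∈ adm, ∀ J : Ideal A, J.FG → I ≤ J → J ∈ adm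

/-- The multiplicative set of elements of `A` generating an admissible ideal. -/
def PhiRing.S {A : Type*} [CommRing A] (Φ : PhiRing A) : Submonoid A where
  carrier := {a : A | Ideal.span {a} ∈ Φ.adm}
  one_mem' := by
    show Ideal.span {(1 : A)} ∈ Φ.adm
    rw [Ideal.span_singleton_one]
    exact Φ.top_mem
  mul_mem' := by
    intro a b ha hb
    show Ideal.span {a * b} ∈ Φ.adm
    rw [← Ideal.span_singleton_mul_span_singleton]
    exact Φ.mul_mem _ ha _ hb

/-- `A` is `Φ`-local if (it is local and) every admissible ideal is invertible;
in a local ring, an ideal is invertible iff it is generated by a single nonzerodivisor. -/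
def PhiRing.IsPhiLocal {A : Type*} [CommRing A] (Φ : PhiRing A) : Prop :=
  ∀ I ∈ Φ.adm, ∃ a ∈ nonZeroDivisors A, I = Ideal.span {a}

/-- Auxiliary: if `f a = x * f s` and `x` satisfies a monic polynomial of positive degree
over `A` (pushed through the injective map `f`), then `s` divides `a ^ deg`. -/
lemma PhiRing.aux_dvd {A K : Type*} [CommRing A] [CommRing K] (f : A →+* K)
    (hf : Function.Injective f) {a s : A} {x : K} (hx : f a = x * f s)
    {p : Polynomial A} (hp : p.Monic) (hev : Polynomial.eval₂ f x p = 0)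
    (_hn : 0 < p.natDegree) : s ∣ a ^ p.natDegree := by
  set n := p.natDegree with hdef
  have key : ∀ i ∈ Finset.range (n + 1),
      f (p.coeff i * (a ^ i * s ^ (n - i))) = f (p.coeff i) * x ^ i * f s ^ n := by
    intro i hi
    rw [Finset.mem_range, Nat.lt_succ_iff] at hi
    calc f (p.coeff i * (a ^ i * s ^ (n - i)))
        = f (p.coeff i) * ((x * f s) ^ i * f s ^ (n - i)) := by
          rw [map_mul, map_mul, map_pow, map_pow, hx]
      _ = f (p.coeff i) * x ^ i * (f s ^ i * f s ^ (n - i)) := by ring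
      _ = f (p.coeff i) * x ^ i * f s ^ n := by rw [← pow_add, Nat.add_sub_cancel' hi]
  have h0 : f (∑ i ∈ Finset.range (n + 1), p.coeff i * (a ^ i * s ^ (n - i))) = 0 := by
    rw [map_sum, Finset.sum_congr rfl key, ← Finset.sum_mul,
      ← Polynomial.eval₂_eq_sum_range, hev, zero_mul]
  have hsum : ∑ i ∈ Finset.range (n + 1), p.coeff i * (a ^ i * s ^ (n - i)) = 0 :=
    hf (by rw [h0, map_zero])
  rw [Finset.sum_range_succ] at hsum
  have hcn : p.coeff n = 1 := hp.coeff_natDegree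
  rw [hcn, Nat.sub_self, pow_zero, mul_one, one_mul] at hsum
  have : a ^ n = -∑ i ∈ Finset.range n, p.coeff i * (a ^ i * s ^ (n - i)) := by
    linear_combination hsum
  rw [this]
  refine dvd_neg.mpr (Finset.dvd_sum fun i hi => ?_)
  rw [Finset.mem_range] at hi
  exact dvd_mul_of_dvd_right
    (dvd_mul_of_dvd_right (dvd_pow_self s (Nat.sub_ne_zero_of_lt hi)) _) _

/-- Every element of `S` is a nonzerodivisor, when `A` is `Φ`-local. -/
lemma PhiRing.S_le_nonZeroDivisors {A : Type*} [CommRing A] (Φ : PhiRing A)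
    (hΦ : Φ.IsPhiLocal) : Φ.S ≤ nonZeroDivisors A := by
  intro s hs
  obtain ⟨t, htnzd, ht⟩ := hΦ _ hs
  have : t ∈ Ideal.span ({s} : Set A) := ht ▸ Ideal.mem_span_singleton_self t
  obtain ⟨u, hu⟩ := Ideal.mem_span_singleton'.mp this
  rw [mem_nonZeroDivisors_iff_right]
  intro y hy
  refine (mem_nonZeroDivisors_iff_right.mp htnzd) y ?_
  rw [← hu, ← mul_assoc, mul_comm y u, mul_assoc, hy, mul_zero]

/-- Let `A` be a `Φ`-local `Φ`-ring.  Then `A` is integrally closed in its closure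
`A^◁ = S⁻¹A`, where `S` is the set of elements of `A` generating an admissible ideal:
every element of `S⁻¹A` integral over `A` lies in (the image of) `A`. -/
theorem PhiRing.integrally_closed_in_closure
    {A : Type*} [CommRing A] [IsLocalRing A] (Φ : PhiRing A) (hΦ : Φ.IsPhiLocal) :
    ∀ x : Localization Φ.S, IsIntegral A x → x ∈ (algebraMap A (Localization Φ.S)).range := by
  intro x hx
  set f := algebraMap A (Localization Φ.S) with hfdef
  rcases subsingleton_or_nontrivial (Localization Φ.S) with hK | hK
  · exact ⟨0, Subsingleton.elim _ _⟩
  have hinj : Function.Injective f :=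
    IsLocalization.injective (Localization Φ.S) (Φ.S_le_nonZeroDivisors hΦ)
  -- write x = a / s
  obtain ⟨⟨a, s⟩, hxs⟩ := IsLocalization.surj Φ.S x
  simp only at hxs
  -- the ideal (a, s) is admissible, hence principal generated by a nonzerodivisor d
  have hI : Ideal.span ({a, s.val} : Set A) ∈ Φ.adm := by
    refine Φ.enlarge_mem _ s.2 _ (Submodule.fg_span ((Set.finite_singleton _).insert _)) ?_
    rw [Ideal.span_singleton_le_iff_mem]
    exact Ideal.subset_span (by simp)
  obtain ⟨d, hdnzd, hd⟩ := hΦ _ hI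
  have hdS : d ∈ Φ.S := by show Ideal.span {d} ∈ Φ.adm; rw [← hd]; exact hI
  -- a = a' * d, s = s' * d
  obtain ⟨a', ha'⟩ := Ideal.mem_span_singleton'.mp
    (hd ▸ Ideal.subset_span (show a ∈ ({a, s.val} : Set A) by simp))
  obtain ⟨s', hs'⟩ := Ideal.mem_span_singleton'.mp
    (hd ▸ Ideal.subset_span (show s.val ∈ ({a, s.val} : Set A) by simp))
  -- s' ∈ S
  have hs'S : s' ∈ Φ.S := by
    show Ideal.span {s'} ∈ Φ.adm
    refine Φ.enlarge_mem _ s.2 _ (Submodule.fg_span (Set.finite_singleton _)) ?_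
    rw [Ideal.span_singleton_le_iff_mem]
    exact Ideal.mem_span_singleton'.mpr ⟨d, by rw [mul_comm]; exact hs'⟩
  -- (a', s') = 1
  have hunit : IsUnit a' ∨ IsUnit s' := by
    obtain ⟨α, β, hαβ⟩ := Ideal.mem_span_pair.mp
      (hd ▸ Ideal.mem_span_singleton_self d : d ∈ Ideal.span ({a, s.val} : Set A))
    have h0 : (α * a' + β * s' - 1) * d = 0 := by
      rw [sub_mul, add_mul, mul_assoc, mul_assoc, ha', hs', hαβ, one_mul, sub_self]
    have h2 : α * a' + β * s' = 1 := sub_eq_zero.mp ((mul_right_mem_nonZeroDivisors_eq_zero_iff hdnzd).mp h0)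
    rcases IsLocalRing.isUnit_or_isUnit_of_add_one h2 with h | h
    · exact Or.inl (isUnit_of_mul_isUnit_right h)
    · exact Or.inr (isUnit_of_mul_isUnit_right h)
  -- x * f s' = f a'
  have hfd : IsUnit (f d) := IsLocalization.map_units (Localization Φ.S) ⟨d, hdS⟩
  have hxs' : f a' = x * f s' := by
    refine hfd.mul_right_cancel ?_
    rw [← map_mul, ha', mul_assoc, ← map_mul, hs', hfdef]
    exact hxs.symm
  -- s' is a unit
  have hus : IsUnit s' := by
    rcases hunit with h | h
    · -- a' unit: use the integral equation to show s' ∣ a' ^ n, hence s' unit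
      obtain ⟨p, hp, hev⟩ := hx
      have hn : 0 < p.natDegree := by
        rcases Nat.eq_zero_or_pos p.natDegree with h0 | h0
        · exfalso
          rw [(Polynomial.Monic.natDegree_eq_zero hp).mp h0] at hev
          simp at hev
        · exact h0
      have hdvd : s' ∣ a' ^ p.natDegree := PhiRing.aux_dvd f hinj hxs' hp hev hn
      exact isUnit_of_dvd_unit hdvd (h.pow _)
    · exact h
  -- conclude: x = f (a' * s'⁻¹)
  obtain ⟨u, hu⟩ := hus
  have hinv : (↑u⁻¹ : A) * s' = 1 := by rw [← hu]; exact u.inv_mul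
  refine ⟨a' * ↑u⁻¹, ?_⟩
  have hfs' : IsUnit (f s') := IsUnit.map f ⟨u, hu⟩
  refine hfs'.mul_right_cancel ?_
  rw [← map_mul, mul_assoc, hinv, mul_one, hxs']
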